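/- Let A be a real m×n matrix, b ∈ ℝ^m, and assume V = {v ∈ ℝ^n : A v ≥ b} is nonempty and bounded. Let (x^i, c^i), i = 1,…,N, be data with x^i ∈ ℝ^K and c^i ∈ ℝ^n, and for ω ∈ ℝ^{n×K} define the pessimistic regret Regret(ω) = sup{(1/N) Σ_{i=1}^N (c^i · v^i − z*(c^i)) : v^i ∈ V*(ω x^i) for each i}. Then the minimum pessimistic regret is attained: there exists ω* ∈ ℝ^{n×K} with Regret(ω*) ≤ Regret(ω) for all ω ∈ ℝ^{n×K}. -/

import Mathlib

open Matrix Set BigOperators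

noncomputable section

/-- The polyhedron `V = {v : A v ≥ b}` (inequalities entrywise). -/
def polyV {m n : ℕ} (A : Matrix (Fin m) (Fin n) ℝ) (b : Fin m → ℝ) : Set (Fin n → ℝ) :=
  {v | b ≤ A.mulVec v}

/-- `z*(c)`: the optimal (infimum) value of `c · v` over `V`. -/
noncomputable def zstar {m n : ℕ} (A : Matrix (Fin m) (Fin n) ℝ) (b : Fin m → ℝ)
    (c : Fin n → ℝ) : ℝ :=
  sInf ((fun v => c ⬝ᵥ v) '' polyV A b)

/-- `V*(c)`: the set of optimal solutions of `min {c · v : v ∈ V}`. -/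
def Vstar {m n : ℕ} (A : Matrix (Fin m) (Fin n) ℝ) (b : Fin m → ℝ)
    (c : Fin n → ℝ) : Set (Fin n → ℝ) :=
  {v ∈ polyV A b | c ⬝ᵥ v = zstar A b c}

/-- The pessimistic regret of the linear model `ω`. -/
noncomputable def pessRegret {m n N K : ℕ} (A : Matrix (Fin m) (Fin n) ℝ) (b : Fin m → ℝ)
    (x : Fin N → Fin K → ℝ) (c : Fin N → Fin n → ℝ)
    (ω : Matrix (Fin n) (Fin K) ℝ) : ℝ :=
  sSup {r : ℝ | ∃ v : Fin N → Fin n → ℝ,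
    (∀ i, v i ∈ Vstar A b (ω.mulVec (x i))) ∧
    r = (1 / (N : ℝ)) * ∑ i, (c i ⬝ᵥ v i - zstar A b (c i))}

lemma extreme_active_span {m n : ℕ} {A : Matrix (Fin m) (Fin n) ℝ} {b : Fin m → ℝ}
    {v : Fin n → ℝ} (hv : v ∈ Set.extremePoints ℝ (polyV A b))
    (u : Fin n → ℝ) (hu : ∀ i, A.mulVec v i = b i → A i ⬝ᵥ u = 0) : u = 0 := by
  by_contra hu0
  have hv' : v ∈ polyV A b := hv.1
  have hev : ∀ᶠ ε : ℝ in nhdsWithin 0 (Set.Ioi 0),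
      (v + ε • u ∈ polyV A b ∧ v - ε • u ∈ polyV A b) := by
    have : ∀ i : Fin m, ∀ᶠ ε : ℝ in nhdsWithin 0 (Set.Ioi 0),
        (b i ≤ A.mulVec (v + ε • u) i ∧ b i ≤ A.mulVec (v - ε • u) i) := by
      intro i
      have hexp : ∀ ε : ℝ, A.mulVec (v + ε • u) i = A.mulVec v i + ε * A.mulVec u i := by
        intro ε
        simp [Matrix.mulVec_add, Matrix.mulVec_smul, smul_eq_mul]
      have hexp' : ∀ ε : ℝ, A.mulVec (v - ε • u) i = A.mulVec v i - ε * A.mulVec u i := by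
        intro ε
        simp [Matrix.mulVec_sub, Matrix.mulVec_smul, smul_eq_mul]
      by_cases h0 : A.mulVec u i = 0
      · refine Filter.Eventually.of_forall fun ε => ?_
        rw [hexp, hexp', h0]
        simp only [mul_zero, add_zero, sub_zero]
        exact ⟨hv' i, hv' i⟩
      · have hlt : b i < A.mulVec v i := by
          rcases lt_or_eq_of_le (hv' i) with h | h
          · exact h
          · exact absurd (hu i h.symm) h0
        have hc : ContinuousAt (fun ε : ℝ => A.mulVec v i - ε * A.mulVec u i) 0 := by fun_prop
        have hc' : ContinuousAt (fun ε : ℝ => A.mulVec v i + ε * A.mulVec u i) 0 := by fun_prop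
        have h1 : ∀ᶠ ε : ℝ in nhds 0, b i < A.mulVec v i + ε * A.mulVec u i := by
          have := hc'.eventually (eventually_gt_nhds (by simpa using hlt) :
            ∀ᶠ y in nhds ((fun ε : ℝ => A.mulVec v i + ε * A.mulVec u i) 0), b i < y)
          simpa using this
        have h2 : ∀ᶠ ε : ℝ in nhds 0, b i < A.mulVec v i - ε * A.mulVec u i := by
          have := hc.eventually (eventually_gt_nhds (by simpa using hlt) :
            ∀ᶠ y in nhds ((fun ε : ℝ => A.mulVec v i - ε * A.mulVec u i) 0), b i < y)
          simpa using this
        filter_upwards [nhdsWithin_le_nhds h1, nhdsWithin_le_nhds h2] with ε e1 e2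
        rw [hexp, hexp']
        exact ⟨e1.le, e2.le⟩
    have := (Filter.eventually_all (ι := Fin m)).2 this
    filter_upwards [this] with ε hε
    exact ⟨fun i => (hε i).1, fun i => (hε i).2⟩
  obtain ⟨ε, ⟨hmem, hmem'⟩, hεpos⟩ := (hev.and eventually_mem_nhdsWithin).exists
  have hεpos : (0:ℝ) < ε := hεpos
  have hseg : v ∈ openSegment ℝ (v - ε • u) (v + ε • u) := by
    refine ⟨1/2, 1/2, by norm_num, by norm_num, by norm_num, ?_⟩
    module
  have := hv.2 hmem' hmem hseg
  have : ε • u = 0 := by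
    have h1 := this
    have : v - ε • u = v := h1
    linear_combination (norm := module) -this
  exact hu0 (by simpa [hεpos.ne'] using (smul_eq_zero.1 this))

lemma extremePoints_polyV_finite {m n : ℕ} (A : Matrix (Fin m) (Fin n) ℝ) (b : Fin m → ℝ) :
    (Set.extremePoints ℝ (polyV A b)).Finite := by
  have hinj : Set.InjOn (fun v : Fin n → ℝ => {i : Fin m | A.mulVec v i = b i})
      (Set.extremePoints ℝ (polyV A b)) := by
    intro v hv v' hv' heq
    have key : ∀ i, A.mulVec v i = b i → A i ⬝ᵥ (v - v') = 0 := by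
      intro i hi
      have hi' : A.mulVec v' i = b i := by
        have h2 : {i : Fin m | A.mulVec v i = b i} = {i : Fin m | A.mulVec v' i = b i} := heq
        have : i ∈ {i : Fin m | A.mulVec v' i = b i} := h2 ▸ hi
        exact this
      have : A i ⬝ᵥ v - A i ⬝ᵥ v' = 0 := by
        change A.mulVec v i - A.mulVec v' i = 0
        rw [hi, hi', sub_self]
      rw [dotProduct_sub]
      exact this
    have := extreme_active_span hv (v - v') key
    exact sub_eq_zero.1 this
  exact Set.Finite.of_finite_image (Set.toFinite _) hinj

noncomputable def dotCLM {n : ℕ} (d : Fin n → ℝ) : (Fin n → ℝ) →L[ℝ] ℝ :=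
  LinearMap.toContinuousLinearMap
    { toFun := fun v => d ⬝ᵥ v
      map_add' := fun u v => by simp [dotProduct_add]
      map_smul' := fun r v => by simp [dotProduct_smul, smul_eq_mul] }

lemma polyV_isClosed {m n : ℕ} (A : Matrix (Fin m) (Fin n) ℝ) (b : Fin m → ℝ) :
    IsClosed (polyV A b) := by
  have : polyV A b = ⋂ i, {v | b i ≤ A.mulVec v i} := by
    ext v; simp [polyV, Pi.le_def]
  rw [this]
  exact isClosed_iInter fun i =>
    isClosed_le continuous_const ((dotCLM (A i)).continuous)

lemma polyV_isCompact {m n : ℕ} {A : Matrix (Fin m) (Fin n) ℝ} {b : Fin m → ℝ}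
    (hbd : Bornology.IsBounded (polyV A b)) : IsCompact (polyV A b) :=
  Metric.isCompact_of_isClosed_isBounded (polyV_isClosed A b) hbd

lemma exists_zstar_min {m n : ℕ} {A : Matrix (Fin m) (Fin n) ℝ} {b : Fin m → ℝ}
    (hne : (polyV A b).Nonempty) (hbd : Bornology.IsBounded (polyV A b))
    (d : Fin n → ℝ) :
    ∃ v0 ∈ polyV A b, zstar A b d = d ⬝ᵥ v0 ∧ ∀ y ∈ polyV A b, d ⬝ᵥ v0 ≤ d ⬝ᵥ y := by
  obtain ⟨v0, hv0, hmin⟩ := (polyV_isCompact hbd).exists_isMinOn hne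
    ((dotCLM d).continuous.continuousOn)
  refine ⟨v0, hv0, ?_, fun y hy => hmin hy⟩
  have : IsLeast ((fun v => d ⬝ᵥ v) '' polyV A b) (d ⬝ᵥ v0) :=
    ⟨⟨v0, hv0, rfl⟩, by rintro r ⟨y, hy, rfl⟩; exact hmin hy⟩
  exact this.csInf_eq

lemma mem_Vstar_iff {m n : ℕ} {A : Matrix (Fin m) (Fin n) ℝ} {b : Fin m → ℝ}
    (hne : (polyV A b).Nonempty) (hbd : Bornology.IsBounded (polyV A b))
    (d : Fin n → ℝ) (v : Fin n → ℝ) :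
    v ∈ Vstar A b d ↔ v ∈ polyV A b ∧ ∀ y ∈ polyV A b, d ⬝ᵥ v ≤ d ⬝ᵥ y := by
  obtain ⟨v0, hv0, hz, hmin⟩ := exists_zstar_min hne hbd d
  constructor
  · rintro ⟨hv, heq⟩
    exact ⟨hv, fun y hy => by rw [heq, hz]; exact hmin y hy⟩
  · rintro ⟨hv, hmax⟩
    exact ⟨hv, le_antisymm (by rw [hz]; exact hmax v0 hv0) (by rw [hz]; exact hmin v hv)⟩

lemma Vstar_isExposed {m n : ℕ} {A : Matrix (Fin m) (Fin n) ℝ} {b : Fin m → ℝ}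
    (hne : (polyV A b).Nonempty) (hbd : Bornology.IsBounded (polyV A b))
    (d : Fin n → ℝ) : IsExposed ℝ (polyV A b) (Vstar A b d) := by
  intro _
  refine ⟨dotCLM (-d), ?_⟩
  ext v
  rw [mem_Vstar_iff hne hbd]
  have : ∀ w : Fin n → ℝ, dotCLM (-d) w = -(d ⬝ᵥ w) := fun w => by
    show (-d) ⬝ᵥ w = _; rw [neg_dotProduct]
  simp only [Set.mem_setOf_eq, this]
  constructor
  · rintro ⟨hv, h⟩; exact ⟨hv, fun y hy => neg_le_neg (h y hy)⟩
  · rintro ⟨hv, h⟩; exact ⟨hv, fun y hy => by have := h y hy; linarith⟩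

lemma exists_extreme_max {m n : ℕ} {A : Matrix (Fin m) (Fin n) ℝ} {b : Fin m → ℝ}
    (hne : (polyV A b).Nonempty) (hbd : Bornology.IsBounded (polyV A b))
    (d c : Fin n → ℝ) :
    ∃ w, w ∈ Vstar A b d ∧ w ∈ Set.extremePoints ℝ (polyV A b) ∧
      ∀ v ∈ Vstar A b d, c ⬝ᵥ v ≤ c ⬝ᵥ w := by
  obtain ⟨v0, hv0, hz, hmin⟩ := exists_zstar_min hne hbd d
  have hv0' : v0 ∈ Vstar A b d := ⟨hv0, hz.symm⟩
  have hVsub : Vstar A b d ⊆ polyV A b := fun v hv => hv.1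
  have hVscl : IsClosed (Vstar A b d) := by
    have : Vstar A b d = polyV A b ∩ {v | d ⬝ᵥ v = zstar A b d} := rfl
    rw [this]
    exact (polyV_isClosed A b).inter
      (isClosed_eq (dotCLM d).continuous continuous_const)
  have hVscpt : IsCompact (Vstar A b d) :=
    (polyV_isCompact hbd).of_isClosed_subset hVscl hVsub
  set t : Set (Fin n → ℝ) := (dotCLM c).toExposed (Vstar A b d) with ht
  have htne : t.Nonempty := by
    obtain ⟨w0, hw0, hmax⟩ := hVscpt.exists_isMaxOn ⟨v0, hv0'⟩
      ((dotCLM c).continuous.continuousOn)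
    exact ⟨w0, hw0, fun y hy => hmax hy⟩
  have htcl : IsClosed t := by
    have : t = Vstar A b d ∩ ⋂ y ∈ Vstar A b d, {v | dotCLM c y ≤ dotCLM c v} := by
      ext v; simp [ht, ContinuousLinearMap.toExposed]
    rw [this]
    exact hVscl.inter (isClosed_biInter fun y _ =>
      isClosed_le continuous_const (dotCLM c).continuous)
  have htsub : t ⊆ Vstar A b d := fun v hv => hv.1
  have htcpt : IsCompact t := hVscpt.of_isClosed_subset htcl htsub
  obtain ⟨w, hw⟩ := htcpt.extremePoints_nonempty htne
  have h1 : w ∈ Set.extremePoints ℝ (Vstar A b d) :=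
    (ContinuousLinearMap.toExposed.isExposed (l := dotCLM c)
      (A := Vstar A b d)).isExtreme.extremePoints_subset_extremePoints hw
  have h2 : w ∈ Set.extremePoints ℝ (polyV A b) :=
    (Vstar_isExposed hne hbd d).isExtreme.extremePoints_subset_extremePoints h1
  have hwt : w ∈ t := extremePoints_subset hw
  exact ⟨w, hwt.1, h2, fun v hv => hwt.2 v hv⟩

theorem stmt_2 (m n N K : ℕ)
    (A : Matrix (Fin m) (Fin n) ℝ) (b : Fin m → ℝ)
    (hne : (polyV A b).Nonempty) (hbd : Bornology.IsBounded (polyV A b))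
    (x : Fin N → Fin K → ℝ) (c : Fin N → Fin n → ℝ) :
    ∃ ωstar : Matrix (Fin n) (Fin K) ℝ,
      ∀ ω : Matrix (Fin n) (Fin K) ℝ,
        pessRegret A b x c ωstar ≤ pessRegret A b x c ω := by
  classical
  set E := Set.extremePoints ℝ (polyV A b) with hE
  have hEfin : E.Finite := extremePoints_polyV_finite A b
  set f : (Fin N → Fin n → ℝ) → ℝ :=
    fun w => (1 / (N : ℝ)) * ∑ i, (c i ⬝ᵥ w i - zstar A b (c i)) with hf
  set G : Set ℝ := f '' (Set.pi Set.univ fun _ : Fin N => E) with hG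
  have hGfin : G.Finite := (Set.Finite.pi fun _ => hEfin).image f
  have hmemG : ∀ ω : Matrix (Fin n) (Fin K) ℝ, pessRegret A b x c ω ∈ G := by
    intro ω
    choose w hw1 hw2 hw3 using fun i => exists_extreme_max hne hbd (ω.mulVec (x i)) (c i)
    have hgr : IsGreatest {r : ℝ | ∃ v : Fin N → Fin n → ℝ,
        (∀ i, v i ∈ Vstar A b (ω.mulVec (x i))) ∧
        r = (1 / (N : ℝ)) * ∑ i, (c i ⬝ᵥ v i - zstar A b (c i))} (f w) := by
      constructor
      · exact ⟨w, hw1, rfl⟩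
      · rintro r ⟨v, hv, rfl⟩
        apply mul_le_mul_of_nonneg_left _ (by positivity)
        exact Finset.sum_le_sum fun i _ =>
          sub_le_sub_right (hw3 i (v i) (hv i)) _
    have : pessRegret A b x c ω = f w := hgr.csSup_eq
    rw [this]
    exact ⟨w, fun i _ => hw2 i, rfl⟩
  set S : Set ℝ := Set.range (pessRegret A b x c) with hS
  have hSsub : S ⊆ G := by rintro r ⟨ω, rfl⟩; exact hmemG ω
  have hSfin : S.Finite := hGfin.subset hSsub
  have hSne : hSfin.toFinset.Nonempty := by
    rw [Set.Finite.toFinset_nonempty]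
    exact ⟨pessRegret A b x c 0, 0, rfl⟩
  obtain ⟨r, hr, hrmin⟩ := hSfin.toFinset.exists_min_image id hSne
  rw [Set.Finite.mem_toFinset] at hr
  obtain ⟨ωstar, rfl⟩ := hr
  exact ⟨ωstar, fun ω => hrmin _ (by rw [Set.Finite.mem_toFinset]; exact ⟨ω, rfl⟩)⟩
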